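/- Let A and B be real 2×2×2 tensors such that A = T₁ + T₂ with T₁, T₂ rank-one tensors. If there exists a real number x such that Δ(B + xT₁) > 0, then the 2×2×2×2 tensor (A;B) has rank at most 4. -/

import Mathlib

open Matrix BigOperators

/-- Cayley hyperdeterminant (up to sign) of a 2×2×2 tensor given by matrix slices A, B. -/
noncomputable def Delta {F : Type*} [Field F] (A B : Matrix (Fin 2) (Fin 2) F) : F :=
  ((A + B).det - (A - B).det) ^ 2 / 4 - 4 * A.det * B.det

/-- Rank of a 2×2×2 tensor, given as a pair of 2×2 matrix slices. -/
noncomputable def trank3 {F : Type*} [Field F] (T : Fin 2 → Matrix (Fin 2) (Fin 2) F) : ℕ :=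
  sInf {r | ∃ u v w : Fin r → Fin 2 → F, ∀ k i j, T k i j = ∑ s, u s k * v s i * w s j}

/-- Rank of a 2×2×2×2 tensor, given as a 2×2 array of 2×2 matrix slices. -/
noncomputable def trank4 {F : Type*} [Field F] (T : Fin 2 → Fin 2 → Matrix (Fin 2) (Fin 2) F) : ℕ :=
  sInf {r | ∃ u v w z : Fin r → Fin 2 → F,
    ∀ k l i j, T k l i j = ∑ s, u s k * v s l * w s i * z s j}

/-- The 2×2 matrix with columns u and v. -/
def col2 {F : Type*} [Field F] (u v : Fin 2 → F) : Matrix (Fin 2) (Fin 2) F :=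
  Matrix.of fun i j => ![u, v] j i

lemma det_lin (X Y : Matrix (Fin 2) (Fin 2) ℝ) (t : ℝ) :
    (Matrix.of fun i j => X i j + t * Y i j).det
      = X.det + t * (((X + Y).det - (X - Y).det) / 2) + t ^ 2 * Y.det := by
  simp [Matrix.det_fin_two, Matrix.add_apply, Matrix.sub_apply]
  ring

lemma Delta_eq (X Y : Matrix (Fin 2) (Fin 2) ℝ) :
    Delta X Y = (((X + Y).det - (X - Y).det) / 2) ^ 2 - 4 * X.det * Y.det := by
  unfold Delta; ring

lemma rank1_of_det_zero (M : Matrix (Fin 2) (Fin 2) ℝ) (h : M.det = 0) :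
    ∃ v w : Fin 2 → ℝ, ∀ i j, M i j = v i * w j := by
  rw [Matrix.det_fin_two] at h
  by_cases h00 : M 0 0 = 0
  · by_cases h01 : M 0 1 = 0
    · refine ⟨![0, 1], M 1, ?_⟩
      intro i j
      fin_cases i <;> fin_cases j <;> simp [h00, h01]
    · refine ⟨![1, M 1 1 / M 0 1], M 0, ?_⟩
      intro i j
      fin_cases i <;> fin_cases j <;> simp <;> field_simp <;> linarith
  · refine ⟨![1, M 1 0 / M 0 0], M 0, ?_⟩
    intro i j
    fin_cases i <;> fin_cases j <;> simp <;> field_simp <;> linarith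

lemma quad_roots (p q b : ℝ) (hq : q ≠ 0) (hD : 0 < b ^ 2 - 4 * p * q) :
    ∃ t₁ t₂ : ℝ, p + t₁ * b + t₁ ^ 2 * q = 0 ∧ p + t₂ * b + t₂ ^ 2 * q = 0 ∧
      t₁ - t₂ ≠ 0 := by
  set d := Real.sqrt (b ^ 2 - 4 * p * q) with hd
  have hd2 : d ^ 2 = b ^ 2 - 4 * p * q := Real.sq_sqrt hD.le
  have hdpos : 0 < d := Real.sqrt_pos.mpr hD
  refine ⟨(-b + d) / (2 * q), (-b - d) / (2 * q), ?_, ?_, ?_⟩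
  · field_simp
    linear_combination hd2
  · field_simp
    linear_combination hd2
  · have : (-b + d) / (2 * q) - (-b - d) / (2 * q) = d / q := by
      field_simp; ring
    rw [this]
    exact div_ne_zero (ne_of_gt hdpos) hq

lemma lin_root (p b : ℝ) (hb : b ≠ 0) : ∃ t : ℝ, p + t * b = 0 :=
  ⟨-p / b, by field_simp; ring⟩

lemma decomp_of_Delta_pos (X Y : Matrix (Fin 2) (Fin 2) ℝ) (h : 0 < Delta X Y) :
    ∃ (a c : Fin 2 → ℝ) (v w : Fin 2 → Fin 2 → ℝ),
      (∀ i j, X i j = a 0 * (v 0 i * w 0 j) + a 1 * (v 1 i * w 1 j)) ∧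
      (∀ i j, Y i j = c 0 * (v 0 i * w 0 j) + c 1 * (v 1 i * w 1 j)) := by
  have hD : Delta X Y = (((X + Y).det - (X - Y).det) / 2) ^ 2 - 4 * X.det * Y.det :=
    Delta_eq X Y
  by_cases hq0 : Y.det = 0
  · -- linear case
    have hbne : ((X + Y).det - (X - Y).det) / 2 ≠ 0 := by
      intro h0
      rw [hD, h0, hq0] at h
      nlinarith
    obtain ⟨t, htt⟩ := lin_root X.det _ hbne
    have hdet1 : (Matrix.of fun i j => X i j + t * Y i j).det = 0 := by
      rw [det_lin, hq0]
      linear_combination htt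
    obtain ⟨v1, w1, hM1⟩ := rank1_of_det_zero _ hdet1
    obtain ⟨v2, w2, hM2⟩ := rank1_of_det_zero Y hq0
    refine ⟨![1, -t], ![0, 1], ![v1, v2], ![w1, w2], ?_, ?_⟩
    · intro i j
      have h1 := hM1 i j
      simp only [Matrix.of_apply] at h1
      have h2 := hM2 i j
      simp only [Matrix.cons_val_zero, Matrix.cons_val_one, Matrix.head_cons]
      linear_combination h1 - t * h2
    · intro i j
      have h2 := hM2 i j
      simp only [Matrix.cons_val_zero, Matrix.cons_val_one, Matrix.head_cons]
      linear_combination h2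
  · -- quadratic case
    obtain ⟨t₁, t₂, e1, e2, hne⟩ := quad_roots X.det Y.det _ hq0 (by rw [← hD]; exact h)
    have hdet1 : (Matrix.of fun i j => X i j + t₁ * Y i j).det = 0 := by
      rw [det_lin]; linear_combination e1
    have hdet2 : (Matrix.of fun i j => X i j + t₂ * Y i j).det = 0 := by
      rw [det_lin]; linear_combination e2
    obtain ⟨v1, w1, hM1⟩ := rank1_of_det_zero _ hdet1
    obtain ⟨v2, w2, hM2⟩ := rank1_of_det_zero _ hdet2
    have hcc : (t₁ - t₂)⁻¹ * (t₁ - t₂) = 1 := inv_mul_cancel₀ hne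
    refine ⟨![-t₂ * (t₁ - t₂)⁻¹, t₁ * (t₁ - t₂)⁻¹], ![(t₁ - t₂)⁻¹, -(t₁ - t₂)⁻¹],
      ![v1, v2], ![w1, w2], ?_, ?_⟩
    · intro i j
      have h1 := hM1 i j
      have h2 := hM2 i j
      simp only [Matrix.of_apply] at h1 h2
      simp only [Matrix.cons_val_zero, Matrix.cons_val_one, Matrix.head_cons]
      linear_combination -(X i j) * hcc - t₂ * (t₁ - t₂)⁻¹ * h1 + t₁ * (t₁ - t₂)⁻¹ * h2
    · intro i j
      have h1 := hM1 i j
      have h2 := hM2 i j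
      simp only [Matrix.of_apply] at h1 h2
      simp only [Matrix.cons_val_zero, Matrix.cons_val_one, Matrix.head_cons]
      linear_combination -(Y i j) * hcc + (t₁ - t₂)⁻¹ * h1 - (t₁ - t₂)⁻¹ * h2

lemma rank1_decomp (T : Fin 2 → Matrix (Fin 2) (Fin 2) ℝ) (h : trank3 T = 1) :
    ∃ u v w : Fin 2 → ℝ, ∀ k i j, T k i j = u k * v i * w j := by
  unfold trank3 at h
  set S := {r | ∃ u v w : Fin r → Fin 2 → ℝ, ∀ k i j, T k i j = ∑ s, u s k * v s i * w s j}
    with hS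
  have hne : S.Nonempty := by
    by_contra h'
    rw [Set.not_nonempty_iff_eq_empty] at h'
    rw [h', Nat.sInf_empty] at h
    exact absurd h (by norm_num)
  have hmem := Nat.sInf_mem hne
  rw [h] at hmem
  obtain ⟨u, v, w, huvw⟩ := hmem
  refine ⟨u 0, v 0, w 0, fun k i j => ?_⟩
  have := huvw k i j
  simpa using this

theorem stmt12 (A B T₁ T₂ : Fin 2 → Matrix (Fin 2) (Fin 2) ℝ)
    (h₁ : trank3 T₁ = 1) (h₂ : trank3 T₂ = 1) (hA : A = T₁ + T₂)
    (hx : ∃ x : ℝ, 0 < Delta ((B + x • T₁) 0) ((B + x • T₁) 1)) :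
    trank4 ![A, B] ≤ 4 := by
  obtain ⟨x, hx⟩ := hx
  obtain ⟨P1, Q1, R1, hT1⟩ := rank1_decomp T₁ h₁
  obtain ⟨P2, Q2, R2, hT2⟩ := rank1_decomp T₂ h₂
  obtain ⟨a, c, V, W, hS0, hS1⟩ := decomp_of_Delta_pos _ _ hx
  have hS0' : ∀ i j, B 0 i j + x * T₁ 0 i j
      = a 0 * (V 0 i * W 0 j) + a 1 * (V 1 i * W 1 j) := by
    intro i j
    have := hS0 i j
    simpa [Matrix.add_apply, Matrix.smul_apply, smul_eq_mul] using this
  have hS1' : ∀ i j, B 1 i j + x * T₁ 1 i j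
      = c 0 * (V 0 i * W 0 j) + c 1 * (V 1 i * W 1 j) := by
    intro i j
    have := hS1 i j
    simpa [Matrix.add_apply, Matrix.smul_apply, smul_eq_mul] using this
  have hAe : ∀ l i j, A l i j = T₁ l i j + T₂ l i j := by
    intro l i j; rw [hA]; simp [Matrix.add_apply]
  apply Nat.sInf_le
  refine ⟨![![1, -x], ![1, 0], ![0, 1], ![0, 1]],
          ![P1, P2, ![a 0, c 0], ![a 1, c 1]],
          ![Q1, Q2, V 0, V 1],
          ![R1, R2, W 0, W 1], ?_⟩
  intro k l i j
  fin_cases k <;> fin_cases l <;>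
    simp [Fin.sum_univ_four, Matrix.vecHead, Matrix.vecTail] <;>
  [ (linear_combination hAe 0 i j + hT1 0 i j + hT2 0 i j);
    (linear_combination hAe 1 i j + hT1 1 i j + hT2 1 i j);
    (linear_combination hS0' i j - x * hT1 0 i j);
    (linear_combination hS1' i j - x * hT1 1 i j) ]
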